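/- Assume the roots setup with 1 ≤ r ≤ N. Let λ = (λ_1 ≥ … ≥ λ_r) be a partition with λ_r ≥ N, and let d ≥ 0 be an integer. Set g_i(z) = z^d (1 − z^{-1})^{λ_i + N + r − i} for 1 ≤ i ≤ r, and let F ∈ ℚ[T] be any polynomial with F(τ) = s_{(g_1,…,g_r)}(z_1,…,z_N). If d < r, then the coefficient of T^d in F is 0. If d ≥ r, then, setting f_i(z) = z^{d−r} (1 − z^{-1})^{λ_i + r − i}, for any polynomial F' ∈ ℚ[T] with F'(τ) = s_{(f_1,…,f_r)}(z_1,…,z_N), the coefficient of T^d in F equals the coefficient of T^{d−r} in F'. -/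

import Mathlib

open Polynomial


/-- The generalized Schur function `s_{(f_1,…,f_r)}(z_1,…,z_N)` attached to functions
`f_1,…,f_r`: `det(M) / det(z_j^{N-i})` where `M_{i,j} = f_i(z_j)·z_j^{N-i}` for `i ≤ r`
and `M_{i,j} = z_j^{N-i}` for `i > r`. -/
noncomputable def genSchurFun {K : Type*} [Field K] (N r : ℕ) (f : Fin r → K → K)
    (z : Fin N → K) : K :=
  Matrix.det (Matrix.of fun i j : Fin N =>
      (if h : (i : ℕ) < r then f ⟨i, h⟩ (z j) else 1) * z j ^ ((N : ℤ) - 1 - ((i : ℕ) : ℤ))) /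
  Matrix.det (Matrix.of fun i j : Fin N => z j ^ ((N : ℤ) - 1 - ((i : ℕ) : ℤ)))


lemma aux_aeval_inj {K : Type*} [Field K] [CharZero K] {τ : K}
    (hτ : Transcendental ℚ τ) {p q : ℚ[X]} (h : aeval τ p = aeval τ q) : p = q := by
  by_contra hne
  exact hτ ⟨p - q, sub_ne_zero.mpr hne, by simp [h]⟩

lemma aux_rootfacts {K : Type*} [Field K] [CharZero K] (N r : ℕ) (hr : 1 ≤ r) (hrN : r ≤ N)
    (τ : K) (hτ : Transcendental ℚ τ) (z : Fin N → K)
    (hroots : ∏ i, (Polynomial.X - Polynomial.C (z i)) =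
      (Polynomial.X - Polynomial.C (1 : K)) ^ N +
        Polynomial.C ((-1 : K) ^ r * τ) * Polynomial.X ^ (N - r)) (j : Fin N) :
    z j ≠ 0 ∧ (z j - 1) ^ N + (-1 : K) ^ r * τ * z j ^ (N - r) = 0 := by
  have hL : Polynomial.eval (z j) (∏ i, (Polynomial.X - Polynomial.C (z i))) = 0 := by
    rw [Polynomial.eval_prod]
    exact Finset.prod_eq_zero (Finset.mem_univ j) (by simp)
  rw [hroots] at hL
  simp only [Polynomial.eval_add, Polynomial.eval_pow, Polynomial.eval_sub, Polynomial.eval_X,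
    Polynomial.eval_C, Polynomial.eval_mul] at hL
  refine ⟨?_, hL⟩
  intro h0
  rw [h0] at hL
  rcases eq_or_lt_of_le hrN with hEq | hlt
  · have hNr : N - r = 0 := by omega
    rw [hNr] at hL
    simp at hL
    -- hL : (-1)^N + (-1)^r * τ = 0  (roughly)
    apply hτ
    refine ⟨Polynomial.C ((-1:ℚ)^N) + Polynomial.C ((-1:ℚ)^r) * Polynomial.X, ?_, ?_⟩
    · intro hc
      have h1 := congrArg (fun p => Polynomial.coeff p 1) hc
      simp only [Polynomial.coeff_add, Polynomial.coeff_C_mul, Polynomial.coeff_X_one,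
        Polynomial.coeff_C, Polynomial.coeff_zero, mul_one] at h1
      norm_num at h1
    · simp only [map_add, map_mul, aeval_C, aeval_X]
      push_cast
      linear_combination hL
  · have hNr : 0 < N - r := by omega
    rw [zero_pow (by omega : N - r ≠ 0)] at hL
    simp at hL

lemma aux_relB {K : Type*} [Field K] (N r : ℕ) (hrN : r ≤ N) (τ w : K) (hw : w ≠ 0)
    (hrel : (w - 1) ^ N + (-1:K)^r * τ * w ^ (N - r) = 0) (d a : ℕ) :
    w ^ d * (1 - w⁻¹) ^ (a + N) = ((-1:K)^(r+1) * τ) * (w ^ ((d:ℤ) - (r:ℤ)) * (1 - w⁻¹) ^ a) := by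
  have h1 : (1 - w⁻¹) = (w - 1) * w⁻¹ := by field_simp
  have h2 : (w - 1) ^ N = (-1:K)^(r+1) * τ * w ^ (N - r) := by
    rw [pow_succ]; linear_combination hrel
  have hN : (1 - w⁻¹) ^ N * w ^ r = (-1:K)^(r+1) * τ := by
    rw [h1, mul_pow, inv_pow]
    calc (w-1)^N * (w^N)⁻¹ * w^r
        = ((-1:K)^(r+1)*τ) * ((w^(N-r) * w^r) * (w^N)⁻¹) := by rw [h2]; ring
      _ = (-1:K)^(r+1)*τ := by
          rw [pow_sub_mul_pow w hrN, mul_inv_cancel₀ (pow_ne_zero _ hw), mul_one]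
  have h3 : (w:K)^d = w ^ (r:ℕ) * w ^ ((d:ℤ) - r) := by
    rw [← zpow_natCast w d, ← zpow_natCast w r, ← zpow_add₀ hw]
    congr 1; ring
  rw [pow_add, ← hN, h3]; ring

lemma aux_card (N r : ℕ) (h : r ≤ N) :
    (Finset.univ.filter (fun i : Fin N => (i:ℕ) < r)).card = r := by
  rw [← Finset.card_range r]
  apply Finset.card_bij (fun (i : Fin N) _ => (i : ℕ))
  · intro a ha; simp only [Finset.mem_filter, Finset.mem_univ, true_and] at ha
    simpa using ha
  · intro a _ b _ hab; exact Fin.ext hab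
  · intro b hb; simp only [Finset.mem_range] at hb
    exact ⟨⟨b, by omega⟩, by simp [hb], rfl⟩

lemma aux_zpow {K : Type*} [Field K] (w a : K) (hw : w ≠ 0) (d r N i μ : ℕ)
    (hi : i < r) (hrN : r ≤ N) :
    (a * w⁻¹) ^ (μ + r) * (w ^ (d + (N - 1 - i)) * (w - 1) ^ μ)
      = a ^ (μ + r) * ((w ^ ((d:ℤ) - (r:ℤ)) * (1 - w⁻¹) ^ μ) * w ^ ((N:ℤ) - 1 - (i:ℤ))) := by
  have h1 : (1 - w⁻¹) = (w - 1) * w⁻¹ := by field_simp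
  have h2 : w ^ ((d:ℤ) - (r:ℤ)) = w ^ (d:ℕ) * (w ^ (r:ℕ))⁻¹ := by
    rw [zpow_sub₀ hw, div_eq_mul_inv, zpow_natCast, zpow_natCast]
  have h3 : w ^ ((N:ℤ) - 1 - (i:ℤ)) = w ^ ((N - 1 - i : ℕ)) := by
    rw [← zpow_natCast]; congr 1; omega
  rw [h1, h2, h3, mul_pow, mul_pow, inv_pow]
  field_simp
  have hwm : w ^ μ * w⁻¹ ^ μ = 1 := by rw [← mul_pow, mul_inv_cancel₀ hw, one_pow]
  linear_combination (-(a ^ μ * a ^ r * w ^ r * w ^ d * w ^ (N - 1 - i) * (w - 1) ^ μ)) * hwm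

lemma aux_C {K : Type*} [Field K] [CharZero K] (N r : ℕ) (hr : 1 ≤ r) (hrN : r ≤ N)
    (τ : K) (z : Fin N → K)
    (hz0 : ∀ j, z j ≠ 0)
    (hrel : ∀ j, (z j - 1) ^ N + (-1 : K) ^ r * τ * z j ^ (N - r) = 0)
    (lam : Fin r → ℕ) (d : ℕ) :
    ∃ Dp cp : Polynomial ℚ, ¬ (Polynomial.X ∣ cp) ∧
      (Polynomial.aeval τ cp) *
        (Matrix.of fun i j : Fin N =>
          (if h : (i : ℕ) < r then
              z j ^ ((d : ℤ) - (r : ℤ)) * (1 - (z j)⁻¹) ^ (lam ⟨i, h⟩ + (r - 1 - (i : ℕ)))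
            else 1) * z j ^ ((N : ℤ) - 1 - ((i : ℕ) : ℤ))).det
      = (Polynomial.aeval τ Dp) *
        (Matrix.of fun i j : Fin N => z j ^ ((N : ℤ) - 1 - ((i : ℕ) : ℤ))).det := by
  classical
  set φ : Polynomial ℚ →+* K := ((Polynomial.aeval τ : Polynomial ℚ →ₐ[ℚ] K) : Polynomial ℚ →+* K) with hφdef
  set ψ : Fin N → Polynomial (Polynomial ℚ) →+* K :=
    fun j => Polynomial.eval₂RingHom φ (z j) with hψdef
  have hψX : ∀ j, ψ j Polynomial.X = z j := fun j => Polynomial.eval₂_X _ _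
  have hψC : ∀ j (q : Polynomial ℚ), ψ j (Polynomial.C q) = Polynomial.aeval τ q :=
    fun j q => Polynomial.eval₂_C _ _
  set P2 : Polynomial (Polynomial ℚ) :=
    (Polynomial.X - Polynomial.C 1) ^ N
      + Polynomial.C ((-1 : Polynomial ℚ) ^ r * Polynomial.X) * Polynomial.X ^ (N - r) with hP2def
  have haux : (Polynomial.aeval τ) ((-1 : Polynomial ℚ) ^ r * Polynomial.X) = (-1 : K) ^ r * τ := by
    rw [map_mul, map_pow, map_neg, map_one, Polynomial.aeval_X]
  have hψP2 : ∀ j, ψ j P2 = 0 := by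
    intro j
    have h1 : ψ j P2 = (z j - 1) ^ N + (-1 : K) ^ r * τ * z j ^ (N - r) := by
      rw [hP2def, map_add, map_pow, map_sub, hψX j, hψC j 1, map_one, map_mul, hψC j,
        map_pow, hψX j, haux]
    rw [h1]; exact hrel j
  have hdegXC : ((Polynomial.X - Polynomial.C (1 : Polynomial ℚ)) ^ N).degree = (N : WithBot ℕ) := by
    rw [Polynomial.degree_pow, Polynomial.degree_X_sub_C]; simp
  have hdegQ : (Polynomial.C ((-1 : Polynomial ℚ) ^ r * Polynomial.X)
      * Polynomial.X ^ (N - r)).degree < ((Polynomial.X - Polynomial.C (1 : Polynomial ℚ)) ^ N).degree := by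
    rw [hdegXC]
    refine lt_of_le_of_lt (Polynomial.degree_C_mul_X_pow_le _ _) ?_
    exact_mod_cast (by omega : N - r < N)
  have hP2monic : P2.Monic := by
    refine Polynomial.Monic.add_of_left ((Polynomial.monic_X_sub_C _).pow N) hdegQ
  have hP2deg : P2.degree = N := by
    rw [hP2def, Polynomial.degree_add_eq_left_of_degree_lt hdegQ, hdegXC]
  have hP2nat : P2.natDegree = N := Polynomial.natDegree_eq_of_degree_eq_some hP2deg
  have hP2ne1 : P2 ≠ 1 := by
    intro h
    have h2 : ((1 : Polynomial (Polynomial ℚ))).degree = (N : WithBot ℕ) := h ▸ hP2deg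
    rw [Polynomial.degree_one] at h2
    have h3 : (0 : ℕ) = N := by exact_mod_cast h2
    omega
  set c0 : Polynomial ℚ := P2.coeff 0 with hc0def
  have hc0coeff : c0.coeff 0 = (-1 : ℚ) ^ N := by
    have hcv : c0 = Polynomial.eval 0 P2 := by rw [hc0def, Polynomial.coeff_zero_eq_eval_zero]
    rw [hcv, Polynomial.coeff_zero_eq_eval_zero, hP2def]
    simp
  have hXndvd : ¬ (Polynomial.X ∣ c0) := by
    rw [Polynomial.X_dvd_iff, hc0coeff]
    exact pow_ne_zero _ (by norm_num)
  set u : Polynomial (Polynomial ℚ) := -P2.divX with hudef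
  have hXu : Polynomial.X * u = Polynomial.C c0 - P2 := by
    have h := Polynomial.X_mul_divX_add P2
    rw [hudef, hc0def]
    linear_combination -h
  have hzu : ∀ j, z j * ψ j u = Polynomial.aeval τ c0 := by
    intro j
    have h := congrArg (ψ j) hXu
    rw [map_mul, map_sub, hψX, hψC, hψP2, sub_zero] at h
    exact h
  set H : Fin r → Polynomial (Polynomial ℚ) := fun i =>
    (u ^ ((lam i + (r - 1 - (i : ℕ))) + r) *
      (Polynomial.X ^ (d + (N - 1 - (i : ℕ))) *
        (Polynomial.X - Polynomial.C 1) ^ (lam i + (r - 1 - (i : ℕ))))) %ₘ P2 with hHdef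
  have hHdeg : ∀ i, (H i).natDegree < N := by
    intro i
    have h := Polynomial.natDegree_modByMonic_lt
      (u ^ ((lam i + (r - 1 - (i : ℕ))) + r) *
        (Polynomial.X ^ (d + (N - 1 - (i : ℕ))) *
          (Polynomial.X - Polynomial.C 1) ^ (lam i + (r - 1 - (i : ℕ))))) hP2monic hP2ne1
    rw [hP2nat] at h
    exact h
  have hkey : ∀ (i : Fin N) (h : (i : ℕ) < r) (j : Fin N),
      ψ j (H ⟨(i : ℕ), h⟩) = Polynomial.aeval τ c0 ^ ((lam ⟨(i : ℕ), h⟩ + (r - 1 - (i : ℕ))) + r) *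
        ((z j ^ ((d : ℤ) - (r : ℤ)) * (1 - (z j)⁻¹) ^ (lam ⟨(i : ℕ), h⟩ + (r - 1 - (i : ℕ)))) *
          z j ^ ((N : ℤ) - 1 - ((i : ℕ) : ℤ))) := by
    intro i h j
    have hmod : ψ j (H ⟨(i : ℕ), h⟩) = ψ j
        (u ^ ((lam ⟨(i : ℕ), h⟩ + (r - 1 - (i : ℕ))) + r) *
          (Polynomial.X ^ (d + (N - 1 - (i : ℕ))) *
            (Polynomial.X - Polynomial.C 1) ^ (lam ⟨(i : ℕ), h⟩ + (r - 1 - (i : ℕ))))) := by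
      rw [hHdef]
      dsimp only
      rw [Polynomial.modByMonic_eq_sub_mul_div _ P2]
      simp only [map_sub, map_mul, hψP2 j, zero_mul, sub_zero]
    have hu : ψ j u = Polynomial.aeval τ c0 * (z j)⁻¹ := by
      rw [← hzu j, mul_comm (z j), mul_assoc, mul_inv_cancel₀ (hz0 j), mul_one]
    rw [hmod, map_mul, map_pow, map_mul, map_pow, map_pow, map_sub, hψX, hψC, map_one, hu]
    exact aux_zpow (z j) (Polynomial.aeval τ c0) (hz0 j) d r N (i : ℕ)
      (lam ⟨(i : ℕ), h⟩ + (r - 1 - (i : ℕ))) h hrN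
  set W : Matrix (Fin N) (Fin N) (Polynomial ℚ) := Matrix.of (fun i k =>
    if h : (i : ℕ) < r then (H ⟨(i : ℕ), h⟩).coeff (N - 1 - (k : ℕ))
    else (if i = k then 1 else 0)) with hWdef
  set sc : Fin N → K := fun i =>
    if h : (i : ℕ) < r then
      (Polynomial.aeval τ c0) ^ ((lam ⟨(i : ℕ), h⟩ + (r - 1 - (i : ℕ))) + r)
    else 1 with hscdef
  have hWV : (W.map φ) * (Matrix.of fun i j : Fin N => z j ^ ((N : ℤ) - 1 - ((i : ℕ) : ℤ)))
      = Matrix.of (fun i j : Fin N => sc i *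
          ((Matrix.of fun i j : Fin N =>
            (if h : (i : ℕ) < r then
              z j ^ ((d : ℤ) - (r : ℤ)) * (1 - (z j)⁻¹) ^ (lam ⟨i, h⟩ + (r - 1 - (i : ℕ)))
            else 1) * z j ^ ((N : ℤ) - 1 - ((i : ℕ) : ℤ))) i j)) := by
    ext i j
    rw [Matrix.mul_apply]
    simp only [Matrix.map_apply, Matrix.of_apply, hWdef, hscdef]
    by_cases h : (i : ℕ) < r
    · simp only [dif_pos h]
      have hsum : ∑ k : Fin N, φ ((H ⟨(i:ℕ),h⟩).coeff (N - 1 - (k:ℕ))) *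
          z j ^ ((N:ℤ) - 1 - ((k:ℕ):ℤ)) = ψ j (H ⟨(i:ℕ),h⟩) := by
        have e1 : ∀ k : Fin N, φ ((H ⟨(i:ℕ),h⟩).coeff (N - 1 - (k:ℕ))) *
            z j ^ ((N:ℤ) - 1 - ((k:ℕ):ℤ))
            = (fun t => φ ((H ⟨(i:ℕ),h⟩).coeff (N - 1 - t)) * z j ^ (N - 1 - t)) (k : ℕ) := by
          intro k
          have hzc : z j ^ ((N:ℤ) - 1 - ((k:ℕ):ℤ)) = z j ^ ((N - 1 - (k:ℕ) : ℕ)) := by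
            rw [← zpow_natCast]
            congr 1
            omega
          rw [hzc]
        rw [Finset.sum_congr rfl (fun k _ => e1 k),
          Fin.sum_univ_eq_sum_range (fun t => φ ((H ⟨(i:ℕ),h⟩).coeff (N - 1 - t)) *
            z j ^ (N - 1 - t)) N,
          Finset.sum_range_reflect (fun t => φ ((H ⟨(i:ℕ),h⟩).coeff t) * z j ^ t) N]
        rw [show (ψ j) (H ⟨(i:ℕ),h⟩) = Polynomial.eval₂ φ (z j) (H ⟨(i:ℕ),h⟩) from rfl]
        rw [Polynomial.eval₂_eq_sum_range' φ (hHdeg ⟨(i:ℕ),h⟩) (z j)]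
      rw [hsum, hkey i h j]
    · simp only [dif_neg h]
      simp only [apply_ite φ, map_one, map_zero, ite_mul, one_mul, zero_mul,
        Finset.sum_ite_eq, Finset.mem_univ, if_true]
  have hdet := congrArg Matrix.det hWV
  rw [Matrix.det_mul, Matrix.det_mul_column] at hdet
  have hmapdet : (W.map φ).det = φ W.det := (RingHom.map_det φ W).symm
  set cp : Polynomial ℚ := ∏ i : Fin N,
    (if h : (i:ℕ) < r then c0 ^ ((lam ⟨(i:ℕ),h⟩ + (r - 1 - (i:ℕ))) + r) else 1) with hcpdef
  have hφcp : Polynomial.aeval τ cp = ∏ i, sc i := by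
    rw [hcpdef, map_prod]
    refine Finset.prod_congr rfl (fun i _ => ?_)
    by_cases h : (i:ℕ) < r
    · simp only [dif_pos h, hscdef, map_pow]
    · simp only [dif_neg h, hscdef, map_one]
  have hcpX : ¬ (Polynomial.X ∣ cp) := by
    rw [hcpdef]
    intro hdvd
    rcases (Polynomial.prime_X.dvd_finset_prod_iff _).1 hdvd with ⟨i, _, hi⟩
    by_cases h : (i:ℕ) < r
    · rw [dif_pos h] at hi
      exact hXndvd (Polynomial.prime_X.dvd_of_dvd_pow hi)
    · rw [dif_neg h] at hi
      exact Polynomial.prime_X.not_dvd_one hi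
  refine ⟨W.det, cp, hcpX, ?_⟩
  rw [hφcp, ← hdet, hmapdet]
  rfl


/-- Roots setup. For a partition `λ` with `λ_r ≥ N` and `d ≥ 0`, set
`g_i(z) = z^d (1 - z⁻¹)^{λ_i + N + r - i}` and let `F ∈ ℚ[T]` satisfy
`F(τ) = s_{(g_1,…,g_r)}(z)`. If `d < r` then the coefficient of `T^d` in `F` is `0`; if
`d ≥ r` then, for `f_i(z) = z^{d-r} (1 - z⁻¹)^{λ_i + r - i}` and any `F' ∈ ℚ[T]` with
`F'(τ) = s_{(f_1,…,f_r)}(z)`, the coefficient of `T^d` in `F` equals the coefficient of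
`T^{d-r}` in `F'`. -/
theorem stmt8 {K : Type*} [Field K] [CharZero K] (N r : ℕ) (hr : 1 ≤ r) (hrN : r ≤ N)
    (τ : K) (hτ : Transcendental ℚ τ)
    (z : Fin N → K) (hz : Function.Injective z)
    (hroots : ∏ i, (Polynomial.X - Polynomial.C (z i)) =
      (Polynomial.X - Polynomial.C (1 : K)) ^ N +
        Polynomial.C ((-1 : K) ^ r * τ) * Polynomial.X ^ (N - r))
    (lam : Fin r → ℕ) (hlam : Antitone lam) (hlamr : N ≤ lam ⟨r - 1, by omega⟩)
    (d : ℕ) :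
    ∀ F : Polynomial ℚ,
      Polynomial.aeval τ F =
        genSchurFun N r
          (fun i w => w ^ d * (1 - w⁻¹) ^ (lam i + N + (r - 1 - (i : ℕ)))) z →
      (d < r → F.coeff d = 0) ∧
      (r ≤ d → ∀ F' : Polynomial ℚ,
        Polynomial.aeval τ F' =
          genSchurFun N r
            (fun i w => w ^ ((d : ℤ) - (r : ℤ)) * (1 - w⁻¹) ^ (lam i + (r - 1 - (i : ℕ)))) z →
        F.coeff d = F'.coeff (d - r)) := by
  intro F hF
  have hz0 : ∀ j, z j ≠ 0 := fun j => (aux_rootfacts N r hr hrN τ hτ z hroots j).1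
  have hrel : ∀ j, (z j - 1) ^ N + (-1 : K) ^ r * τ * z j ^ (N - r) = 0 :=
    fun j => (aux_rootfacts N r hr hrN τ hτ z hroots j).2
  have hgf : genSchurFun N r
      (fun i w => w ^ ((d : ℤ) - (r : ℤ)) * (1 - w⁻¹) ^ (lam i + (r - 1 - (i : ℕ)))) z
      = (Matrix.of fun i j : Fin N => (if h : (i : ℕ) < r then z j ^ ((d : ℤ) - (r : ℤ)) * (1 - (z j)⁻¹) ^ (lam ⟨i, h⟩ + (r - 1 - (i : ℕ))) else 1) * z j ^ ((N : ℤ) - 1 - ((i : ℕ) : ℤ))).det / (Matrix.of fun i j : Fin N => z j ^ ((N : ℤ) - 1 - ((i : ℕ) : ℤ))).det := rfl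
  have hnum : genSchurFun N r
      (fun i w => w ^ d * (1 - w⁻¹) ^ (lam i + N + (r - 1 - (i : ℕ)))) z
      = (Matrix.of fun i j : Fin N => (if h : (i : ℕ) < r then z j ^ d * (1 - (z j)⁻¹) ^ (lam ⟨i, h⟩ + N + (r - 1 - (i : ℕ))) else 1) * z j ^ ((N : ℤ) - 1 - ((i : ℕ) : ℤ))).det / (Matrix.of fun i j : Fin N => z j ^ ((N : ℤ) - 1 - ((i : ℕ) : ℤ))).det := rfl
  have hMg : (Matrix.of fun i j : Fin N => (if h : (i : ℕ) < r then z j ^ d * (1 - (z j)⁻¹) ^ (lam ⟨i, h⟩ + N + (r - 1 - (i : ℕ))) else 1) * z j ^ ((N : ℤ) - 1 - ((i : ℕ) : ℤ)))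
      = Matrix.of (fun i j : Fin N =>
          (if (i : ℕ) < r then ((-1 : K) ^ (r + 1) * τ) else 1) * (Matrix.of fun i j : Fin N => (if h : (i : ℕ) < r then z j ^ ((d : ℤ) - (r : ℤ)) * (1 - (z j)⁻¹) ^ (lam ⟨i, h⟩ + (r - 1 - (i : ℕ))) else 1) * z j ^ ((N : ℤ) - 1 - ((i : ℕ) : ℤ))) i j) := by
    ext i j
    simp only [Matrix.of_apply]
    by_cases h : (i : ℕ) < r
    · simp only [dif_pos h, if_pos h]
      rw [show lam ⟨(i : ℕ), h⟩ + N + (r - 1 - (i : ℕ))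
          = (lam ⟨(i : ℕ), h⟩ + (r - 1 - (i : ℕ))) + N from by omega]
      rw [aux_relB N r hrN τ (z j) (hz0 j) (hrel j) d (lam ⟨(i : ℕ), h⟩ + (r - 1 - (i : ℕ)))]
      ring
    · simp only [dif_neg h, if_neg h, one_mul]
  have hprod : (∏ i : Fin N, (if (i : ℕ) < r then ((-1 : K) ^ (r + 1) * τ) else 1))
      = τ ^ r := by
    rw [Finset.prod_ite, Finset.prod_const, Finset.prod_const_one, mul_one, aux_card N r hrN]
    rw [mul_pow, ← pow_mul]
    rw [show (r + 1) * r = r * (r + 1) from Nat.mul_comm _ _]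
    rw [Even.neg_one_pow (Nat.even_mul_succ_self r), one_mul]
  have hB : Polynomial.aeval τ F = τ ^ r * ((Matrix.of fun i j : Fin N => (if h : (i : ℕ) < r then z j ^ ((d : ℤ) - (r : ℤ)) * (1 - (z j)⁻¹) ^ (lam ⟨i, h⟩ + (r - 1 - (i : ℕ))) else 1) * z j ^ ((N : ℤ) - 1 - ((i : ℕ) : ℤ))).det / (Matrix.of fun i j : Fin N => z j ^ ((N : ℤ) - 1 - ((i : ℕ) : ℤ))).det) := by
    rw [hF, hnum, hMg, Matrix.det_mul_column, hprod, mul_div_assoc]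
  constructor
  · intro hdr
    obtain ⟨Dp, cp, hcpX, heq⟩ := aux_C N r hr hrN τ z hz0 hrel lam d
    by_cases hV0 : (Matrix.of fun i j : Fin N => z j ^ ((N : ℤ) - 1 - ((i : ℕ) : ℤ))).det = 0
    · rw [hV0, div_zero, mul_zero] at hB
      have hF0 : F = 0 := aux_aeval_inj hτ (by rw [hB, map_zero])
      rw [hF0]
      simp
    · have h3 : F * cp = Polynomial.X ^ r * Dp := by
        apply aux_aeval_inj hτ
        rw [map_mul, map_mul, map_pow, Polynomial.aeval_X]
        apply mul_right_cancel₀ hV0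
        rw [hB]
        rw [show τ ^ r * ((Matrix.of fun i j : Fin N => (if h : (i : ℕ) < r then z j ^ ((d : ℤ) - (r : ℤ)) * (1 - (z j)⁻¹) ^ (lam ⟨i, h⟩ + (r - 1 - (i : ℕ))) else 1) * z j ^ ((N : ℤ) - 1 - ((i : ℕ) : ℤ))).det / (Matrix.of fun i j : Fin N => z j ^ ((N : ℤ) - 1 - ((i : ℕ) : ℤ))).det) * Polynomial.aeval τ cp * (Matrix.of fun i j : Fin N => z j ^ ((N : ℤ) - 1 - ((i : ℕ) : ℤ))).det
            = τ ^ r * (Polynomial.aeval τ cp * (Matrix.of fun i j : Fin N => (if h : (i : ℕ) < r then z j ^ ((d : ℤ) - (r : ℤ)) * (1 - (z j)⁻¹) ^ (lam ⟨i, h⟩ + (r - 1 - (i : ℕ))) else 1) * z j ^ ((N : ℤ) - 1 - ((i : ℕ) : ℤ))).det) * ((Matrix.of fun i j : Fin N => z j ^ ((N : ℤ) - 1 - ((i : ℕ) : ℤ))).det / (Matrix.of fun i j : Fin N => z j ^ ((N : ℤ) - 1 - ((i : ℕ) : ℤ))).det) from by ring]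
        rw [div_self hV0, heq]
        ring
      have h5 : Polynomial.X ^ r ∣ F :=
        Polynomial.prime_X.pow_dvd_of_dvd_mul_right r hcpX ⟨Dp, h3⟩
      exact Polynomial.X_pow_dvd_iff.mp h5 d hdr
  · intro hrd F' hF'
    have hF'2 : Polynomial.aeval τ F' = (Matrix.of fun i j : Fin N => (if h : (i : ℕ) < r then z j ^ ((d : ℤ) - (r : ℤ)) * (1 - (z j)⁻¹) ^ (lam ⟨i, h⟩ + (r - 1 - (i : ℕ))) else 1) * z j ^ ((N : ℤ) - 1 - ((i : ℕ) : ℤ))).det / (Matrix.of fun i j : Fin N => z j ^ ((N : ℤ) - 1 - ((i : ℕ) : ℤ))).det := by rw [hF', hgf]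
    have h6 : F = Polynomial.X ^ r * F' := by
      apply aux_aeval_inj hτ
      rw [hB, map_mul, map_pow, Polynomial.aeval_X, hF'2]
    rw [h6, ← Polynomial.coeff_X_pow_mul F' r (d - r)]
    congr 1
    omega
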